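/- Define G₁ = I + (α₁/f₁)E₂₁ (3×3 matrix, E₂₁ the matrix unit). Suppose M is the matrix of Section 4 (M = diag(ε₁,ε₂,ε₃) + f₁E₁₂ + gE₁₃ + f₂E₂₃ + z(E₁₁ + 3qE₂₁ + (-2)E₂₂ + f₀E₃₁ + 3rE₃₂ + E₃₃)). Then the gauge-transformed matrix G₁MG₁⁻¹ + 4z(∂G₁/∂z)G₁⁻¹ equals the matrix obtained from M by the substitutions ε₁ ↦ ε₂, ε₂ ↦ ε₁ (equivalently α₁ ↦ -α₁, α₀ ↦ α₀+α₁, α₂ ↦ α₂+α₁), f₀ ↦ f₀ - 3rα₁/f₁, f₂ ↦ f₂ + gα₁/f₁, q ↦ q + α₁/f₁, with f₁, g, r unchanged, provided f₁ is treated as a function of x with the appropriate derivative relation. -/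

import Mathlib

open Polynomial

/-- The matrix M of Section 4: M = diag(ε₁,ε₂,ε₃) + f₁E₁₂ + gE₁₃ + f₂E₂₃
  + z(E₁₁ + 3qE₂₁ - 2E₂₂ + f₀E₃₁ + 3rE₃₂ + E₃₃). -/
noncomputable def Msec4 (ε1 ε2 ε3 f0 f1 f2 g q r : ℂ) : Matrix (Fin 3) (Fin 3) (Polynomial ℂ) :=
  Matrix.of ![![C ε1 + X, C f1, C g],
              ![C (3 * q) * X, C ε2 - 2 * X, C f2],
              ![C f0 * X, C (3 * r) * X, C ε3 + X]]

/-- The gauge matrix G₁ = I + (α₁/f₁)E₂₁. -/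
noncomputable def G1 (α1 f1 : ℂ) : Matrix (Fin 3) (Fin 3) (Polynomial ℂ) :=
  1 + C (α1 / f1) • Matrix.single 1 0 1

/-- The inverse gauge matrix G₁⁻¹ = I - (α₁/f₁)E₂₁. -/
noncomputable def G1inv (α1 f1 : ℂ) : Matrix (Fin 3) (Fin 3) (Polynomial ℂ) :=
  1 - C (α1 / f1) • Matrix.single 1 0 1

theorem stmt_19 (ε1 ε2 ε3 f0 f1 f2 g q r α1 : ℂ)
    (hα1 : α1 = ε1 - ε2) (hf1 : f1 ≠ 0)
    (hconstr : g = f0 + 3 * q * r) :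
    G1 α1 f1 * G1inv α1 f1 = 1 ∧
    G1 α1 f1 * Msec4 ε1 ε2 ε3 f0 f1 f2 g q r * G1inv α1 f1
      + (4 : Polynomial ℂ) •
        (((G1 α1 f1).map fun p => X * derivative p) * G1inv α1 f1)
      = Msec4 ε2 ε1 ε3 (f0 - 3 * r * α1 / f1) f1 (f2 + g * α1 / f1) g
          (q + α1 / f1) r := by
  obtain ⟨a, ha⟩ : ∃ a, α1 = a * f1 := ⟨α1 / f1, (div_mul_cancel₀ _ hf1).symm⟩
  have h2 : α1 / f1 = a := by rw [ha]; field_simp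
  have k1 : (C f1 : ℂ[X]) * C a = C ε1 - C ε2 := by
    rw [← C_mul, ← C_sub]; congr 1; rw [mul_comm, ← ha, hα1]
  have k2 : (C g : ℂ[X]) = C f0 + 3 * C q * C r := by
    rw [hconstr, C_add, C_mul, C_mul, map_ofNat]
  constructor
  · refine Matrix.ext fun i j => ?_
    fin_cases i <;> fin_cases j <;>
      simp [G1, G1inv, Matrix.mul_apply, Fin.sum_univ_succ, Matrix.one_apply,
        Matrix.single, Matrix.smul_apply, h2]
  · refine Matrix.ext fun i j => ?_
    fin_cases i <;> fin_cases j <;>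
      simp [G1, G1inv, Msec4, Matrix.mul_apply, Fin.sum_univ_succ, Matrix.one_apply,
        Matrix.single, Matrix.smul_apply, h2, mul_div_assoc, C_add, C_mul, C_sub,
        map_ofNat] <;>
      first
        | ring1
        | linear_combination k1
        | linear_combination -k1
        | linear_combination X * k1
        | linear_combination -X * k1
        | linear_combination C a * k1
        | linear_combination -C a * k1
        | linear_combination C a * k2
        | linear_combination C a * k2 + 3 * C r * k1
        | linear_combination C a * k2 - 3 * C r * k1
        | linear_combination C a * k2 - C a * C a * k1
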